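/- Let X ⊂ ℂ be a compact set and f : X → X a continuous map which extends to a holomorphic map f : W' → W on some neighborhoods W', W of X, such that f⁻¹(X) = X, the degree of f restricted over X equals N ≥ 2, all critical points of f : W' → W lie in X, and X is not equal to the union of cycles of critical points of f. Let C and C_s denote the sets of non-periodic and periodic critical points of f : X → X respectively, let C(σ) be the open σ-neighborhood of C, and let C_s(σ) be a forward-invariant neighborhood of C_s (f(C_s(σ)) ⊂ C_s(σ)) contained in the σ-neighborhood of C_s. Then for every t ∈ (0, 1) there exist σ > 0 and an integer k₀ such that for every k ≥ k₀ and every y ∈ X: if y, f(y), f²(y), ..., f^k(y) ∉ C_s(σ), then the number of indices j with 0 ≤ j < k and f^j(y) ∈ C(σ) is strictly less than t·k. -/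

import Mathlib

open Set Function Metric Topology Filter

noncomputable section

/-- The local multiplicity of a holomorphic map `f` at `z`: the least `m ≥ 1` with
`f⁽ᵐ⁾(z) ≠ 0` (so `m = 1` at non-critical points). -/
def locMult (f : ℂ → ℂ) (z : ℂ) : ℕ :=
  sInf {m : ℕ | 0 < m ∧ iteratedDeriv m f z ≠ 0}

/-- The degree of `f` restricted over `X` equals `N`: every point of `X` has exactly `N`
preimages in `X`, counted with multiplicity. -/
def DegOver (f : ℂ → ℂ) (X : Set ℂ) (N : ℕ) : Prop :=
  ∀ x ∈ X, (X ∩ f ⁻¹' {x}).Finite ∧ ∑ᶠ z ∈ X ∩ f ⁻¹' {x}, locMult f z = N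

/-- The union of the cycles of the periodic critical points of `f`. -/
def critCycles (f : ℂ → ℂ) (W' : Set ℂ) : Set ℂ :=
  ⋃ c ∈ {c | c ∈ W' ∧ deriv f c = 0 ∧ ∃ p : ℕ, 0 < p ∧ f^[p] c = c},
    Set.range fun n : ℕ => f^[n] c

/-- `P` is `(k, δ)`-separated for `f`. -/
def IsDynSeparated (f : ℂ → ℂ) (k : ℕ) (δ : ℝ) (P : Set ℂ) : Prop :=
  ∀ z₁ ∈ P, ∀ z₂ ∈ P, z₁ ≠ z₂ → ∃ j < k, δ < dist (f^[j] z₁) (f^[j] z₂)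

/-- `r_k(f, δ)`: the maximal cardinality of a `(k, δ)`-separated subset of `X`. -/
def sepMaxCard (f : ℂ → ℂ) (X : Set ℂ) (k : ℕ) (δ : ℝ) : ℕ :=
  sSup {n : ℕ | ∃ P : Set ℂ, P ⊆ X ∧ P.Finite ∧ IsDynSeparated f k δ P ∧ P.ncard = n}

/-- Topological entropy of `f : X → X`, via `(k, δ)`-separated sets:
`h_top(f) = lim_{δ → 0} limsup_k (1/k) log r_k(f, δ) = sup_{δ > 0} limsup_k (1/k) log r_k(f, δ)`
(the inner quantity is monotone in `δ`). -/
def topEnt (f : ℂ → ℂ) (X : Set ℂ) : EReal :=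
  ⨆ (δ : ℝ) (_ : 0 < δ),
    Filter.limsup (fun k : ℕ => ((Real.log (sepMaxCard f X k δ) / k : ℝ) : EReal)) atTop

/-- The non-periodic critical points of `f : X → X`. -/
def nonPerCrit (f : ℂ → ℂ) (X : Set ℂ) : Set ℂ :=
  {c | c ∈ X ∧ deriv f c = 0 ∧ ¬ ∃ p : ℕ, 0 < p ∧ f^[p] c = c}

/-- The periodic critical points of `f : X → X`. -/
def perCrit (f : ℂ → ℂ) (X : Set ℂ) : Set ℂ :=
  {c | c ∈ X ∧ deriv f c = 0 ∧ ∃ p : ℕ, 0 < p ∧ f^[p] c = c}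

/-- The critical points of `f` lying in `X` form a finite set. -/
lemma critical_in_X_finite {X W' : Set ℂ} {f : ℂ → ℂ} {N : ℕ}
    (hXcomp : IsCompact X) (hW' : IsOpen W') (hXW' : X ⊆ W')
    (hf : DifferentiableOn ℂ f W') (hXmaps : MapsTo f X X)
    (hdeg : DegOver f X N)
    (hcrit : {z | z ∈ W' ∧ deriv f z = 0} ⊆ X) :
    (X ∩ {z | deriv f z = 0}).Finite := by
  by_contra hinf
  have hinf : (X ∩ {z | deriv f z = 0}).Infinite := hinf
  obtain ⟨a, haX, hacc⟩ :=
    hinf.exists_accPt_of_subset_isCompact hXcomp Set.inter_subset_left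
  have hAd : AnalyticAt ℂ (deriv f) a :=
    ((hf.analyticOnNhd hW').deriv_of_isOpen hW') a (hXW' haX)
  rcases hAd.eventually_eq_zero_or_eventually_ne_zero with h0 | hne
  · -- deriv f ≡ 0 near a : f is constant on a small ball, contradicting finite fibers
    obtain ⟨ρ₁, hρ₁, hball₁⟩ := Metric.eventually_nhds_iff_ball.mp h0
    obtain ⟨ρ₂, hρ₂, hball₂⟩ := Metric.isOpen_iff.mp hW' a (hXW' haX)
    set ρ := min ρ₁ ρ₂ with hρdef
    have hρ : 0 < ρ := lt_min hρ₁ hρ₂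
    have hBW' : Metric.ball a ρ ⊆ W' := (Metric.ball_subset_ball (min_le_right _ _)).trans hball₂
    have hB0 : ∀ z ∈ Metric.ball a ρ, deriv f z = 0 := fun z hz =>
      hball₁ z (Metric.ball_subset_ball (min_le_left _ _) hz)
    have hBd : DifferentiableOn ℂ f (Metric.ball a ρ) := hf.mono hBW'
    have hfd0 : ∀ z ∈ Metric.ball a ρ, fderivWithin ℂ f (Metric.ball a ρ) z = 0 := by
      intro z hz
      rw [fderivWithin_of_isOpen (𝕜 := ℂ) Metric.isOpen_ball hz]
      apply ContinuousLinearMap.ext_ring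
      simpa [fderiv_apply_one_eq_deriv] using hB0 z hz
    have hconst : ∀ z ∈ Metric.ball a ρ, f z = f a := fun z hz =>
      (convex_ball a ρ).is_const_of_fderivWithin_eq_zero hBd hfd0 hz
        (Metric.mem_ball_self hρ)
    have hsub : Metric.ball a ρ ⊆ X ∩ f ⁻¹' {f a} := by
      intro z hz
      refine ⟨hcrit ⟨hBW' hz, hB0 z hz⟩, ?_⟩
      simp [hconst z hz]
    have hfin := (hdeg (f a) (hXmaps haX)).1
    exact (infinite_of_mem_nhds a (Metric.ball_mem_nhds a hρ)) (hfin.subset hsub)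
  · -- deriv f ≠ 0 near a (punctured) : contradicts accumulation of critical points
    have hfreq : ∃ᶠ y in 𝓝 a, y ≠ a ∧ y ∈ X ∩ {z | deriv f z = 0} :=
      accPt_iff_frequently.mp hacc
    have hfreq' : ∃ᶠ y in 𝓝[≠] a, deriv f y = 0 := by
      rw [frequently_nhdsWithin_iff]
      exact hfreq.mono fun y hy => ⟨hy.2.2, hy.1⟩
    exact (hfreq'.and_eventually hne).exists.elim fun y hy => hy.2 hy.1

/-- **Claim (⋆).** In the setting of the entropy theorem, with all critical points of
`f : W' → W` lying in `X`: for every `t ∈ (0,1)` there exist `σ > 0` and `k₀` such that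
for every `k ≥ k₀` and every `y ∈ X`, if `y, f(y), …, f^k(y) ∉ C_s(σ)` then
`#{j : 0 ≤ j < k, f^j(y) ∈ C(σ)} < t·k`. Here `C(σ)` is the `σ`-neighborhood of the set
`C` of non-periodic critical points, and `C_s(σ)` is any chosen forward-invariant open
neighborhood of the set `C_s` of periodic critical points contained in its
`σ`-neighborhood. -/
theorem visits_to_critical_neighborhood_rare {X W' W : Set ℂ} {f : ℂ → ℂ} {N : ℕ}
    (hXcomp : IsCompact X) (hW' : IsOpen W') (hW : IsOpen W)
    (hXW' : X ⊆ W') (hXW : X ⊆ W)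
    (hf : DifferentiableOn ℂ f W') (hmaps : MapsTo f W' W)
    (hXmaps : MapsTo f X X) (hinv : W' ∩ f ⁻¹' X = X)
    (hN : 2 ≤ N) (hdeg : DegOver f X N)
    (hcrit : {z | z ∈ W' ∧ deriv f z = 0} ⊆ X)
    (hX : X ≠ critCycles f W')
    (Ns : ℝ → Set ℂ)
    (hNs : ∀ σ > (0 : ℝ), IsOpen (Ns σ) ∧ perCrit f X ⊆ Ns σ ∧ Ns σ ⊆ W' ∧
      f '' Ns σ ⊆ Ns σ ∧ Ns σ ⊆ Metric.thickening σ (perCrit f X)) :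
    ∀ t ∈ Set.Ioo (0 : ℝ) 1, ∃ σ > (0 : ℝ), ∃ k₀ : ℕ, ∀ k ≥ k₀, ∀ y ∈ X,
      (∀ j ≤ k, f^[j] y ∉ Ns σ) →
      (({j : ℕ | j < k ∧ f^[j] y ∈ ⋃ c ∈ nonPerCrit f X, Metric.ball c σ}.ncard : ℝ)
        < t * k) := by
  classical
  intro t ht
  obtain ⟨ht0, ht1⟩ := ht
  set C : Set ℂ := nonPerCrit f X with hCdef
  have hCsub : C ⊆ X ∩ {z | deriv f z = 0} := fun c hc => ⟨hc.1, hc.2.1⟩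
  have hCfin : C.Finite :=
    (critical_in_X_finite hXcomp hW' hXW' hf hXmaps hdeg hcrit).subset hCsub
  rcases Set.eq_empty_or_nonempty C with hCe | hCne
  · -- no non-periodic critical points: the count is always 0
    refine ⟨1, one_pos, 1, fun k hk y _ _ => ?_⟩
    have : {j : ℕ | j < k ∧ f^[j] y ∈ ⋃ c ∈ nonPerCrit f X, Metric.ball c 1} = ∅ := by
      rw [← hCdef, hCe]; simp
    rw [this]
    simp only [Set.ncard_empty, Nat.cast_zero]
    have : (1 : ℝ) ≤ (k : ℝ) := by exact_mod_cast hk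
    positivity
  -- main case
  set Cf : Finset ℂ := hCfin.toFinset with hCfdef
  have hmemCf : ∀ z, z ∈ Cf ↔ z ∈ C := fun z => hCfin.mem_toFinset
  set r : ℕ := Cf.card with hrdef
  have hrpos : 0 < r := Finset.card_pos.mpr (by
    obtain ⟨c, hc⟩ := hCne; exact ⟨c, (hmemCf c).mpr hc⟩)
  set H : ℕ := ⌈(2 * r) / t⌉₊ + 1 with hHdef
  have hHpos : 0 < H := Nat.succ_pos _
  have hHgt : (2 * r) / t < (H : ℝ) := by
    calc (2 * r) / t ≤ (⌈(2 * r) / t⌉₊ : ℝ) := Nat.le_ceil _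
    _ < (H : ℝ) := by rw [hHdef]; push_cast; linarith
  -- orbit stays in X
  have horb : ∀ n : ℕ, ∀ z ∈ X, f^[n] z ∈ X := by
    intro n
    induction n with
    | zero => simpa using fun z hz => hz
    | succ n ih =>
      intro z hz
      rw [Function.iterate_succ_apply']
      exact hXmaps (ih z hz)
  -- the finite set of orbit points of critical points up to time H
  set D : Finset ℂ :=
    Finset.image (fun p : ℂ × ℕ => f^[p.2] p.1) (Cf ×ˢ Finset.range (H + 1)) with hDdef
  have hmemD : ∀ c ∈ Cf, ∀ n ≤ H, f^[n] c ∈ D := by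
    intro c hc n hn
    rw [hDdef]
    exact Finset.mem_image.mpr ⟨(c, n), Finset.mem_product.mpr
      ⟨hc, Finset.mem_range.mpr (Nat.lt_succ_of_le hn)⟩, rfl⟩
  set D' : Finset ℂ := D.filter (fun z => z ∉ C) with hD'def
  set ε : ℝ := if hD' : D'.Nonempty then min 1 (D'.inf' hD' (fun z => Metric.infDist z C))
    else 1 with hεdef
  have hCclosed : IsClosed C := hCfin.isClosed
  have hεpos : 0 < ε := by
    rw [hεdef]
    split_ifs with hD'
    · refine lt_min one_pos ?_
      rw [Finset.lt_inf'_iff]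
      intro z hz
      have hzC : z ∉ C := (Finset.mem_filter.mp hz).2
      exact (hCclosed.notMem_iff_infDist_pos hCne).mp hzC
    · exact one_pos
  have hεle : ∀ z ∈ D, z ∉ C → ε ≤ Metric.infDist z C := by
    intro z hzD hzC
    have hz' : z ∈ D' := Finset.mem_filter.mpr ⟨hzD, hzC⟩
    rw [hεdef]
    rw [dif_pos ⟨z, hz'⟩]
    exact le_trans (min_le_right _ _) (Finset.inf'_le _ hz')
  -- uniform continuity of all iterates up to time H
  have hcont : ContinuousOn f X := (hf.mono hXW').continuousOn
  have hitcont : ∀ n : ℕ, ContinuousOn f^[n] X := by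
    intro n
    induction n with
    | zero => simpa using continuousOn_id
    | succ n ih =>
      rw [Function.iterate_succ']
      exact hcont.comp ih (hXmaps.iterate n)
  have hUC : ∀ n : ℕ, ∃ δ > 0, ∀ x ∈ X, ∀ c ∈ X, dist x c < δ →
      dist (f^[n] x) (f^[n] c) < ε / 3 := by
    intro n
    have := hXcomp.uniformContinuousOn_of_continuous (hitcont n)
    rw [Metric.uniformContinuousOn_iff] at this
    obtain ⟨δ, hδ0, hδ⟩ := this (ε / 3) (by positivity)
    exact ⟨δ, hδ0, fun x hx c hc h => hδ x hx c hc h⟩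
  choose δ hδ0 hδ using hUC
  set σ : ℝ := min (ε / 3) ((Finset.range (H + 1)).inf' ⟨0, by simp⟩ δ) with hσdef
  have hσpos : 0 < σ := by
    refine lt_min (by positivity) ?_
    exact (Finset.lt_inf'_iff _).mpr fun n _ => hδ0 n
  have hσδ : ∀ n ≤ H, σ ≤ δ n := by
    intro n hn
    exact le_trans (min_le_right _ _)
      (Finset.inf'_le _ (Finset.mem_range.mpr (Nat.lt_succ_of_le hn)))
  have hσε : σ ≤ ε / 3 := min_le_left _ _
  refine ⟨σ, hσpos, H, fun k hk y hy _ => ?_⟩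
  set P : ℕ → Prop := fun j => f^[j] y ∈ ⋃ c ∈ C, Metric.ball c σ with hPdef
  set V : Finset ℕ := (Finset.range k).filter P with hVdef
  have hsetV : {j : ℕ | j < k ∧ f^[j] y ∈ ⋃ c ∈ nonPerCrit f X, Metric.ball c σ} = ↑V := by
    ext j
    simp [hVdef, hPdef, hCdef]
  rw [hsetV, Set.ncard_coe_finset]
  -- per-window bound
  have hwindow : ∀ i : ℕ, ((Finset.Ico (i * H) (i * H + H)).filter P).card ≤ r := by
    intro i
    set Wi : Finset ℕ := (Finset.Ico (i * H) (i * H + H)).filter P with hWidef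
    rcases Wi.eq_empty_or_nonempty with hWe | hWne
    · rw [hWe]; simp
    set j₀ : ℕ := Wi.min' hWne with hj₀def
    have hj₀mem : j₀ ∈ Wi := Wi.min'_mem hWne
    have hj₀P : P j₀ := (Finset.mem_filter.mp hj₀mem).2
    obtain ⟨c, hcC, hcball⟩ : ∃ c ∈ C, f^[j₀] y ∈ Metric.ball c σ := by
      simpa [hPdef] using hj₀P
    have hcX : c ∈ X := hcC.1
    -- every visit in the window is shadowed by an orbit point of c that lies in C
    have hkey : ∀ j ∈ Wi, f^[j - j₀] c ∈ Cf := by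
      intro j hj
      have hj₀le : j₀ ≤ j := Wi.min'_le j hj
      have hjIco := (Finset.mem_filter.mp hj).1
      have hj₀Ico := (Finset.mem_filter.mp hj₀mem).1
      rw [Finset.mem_Ico] at hjIco hj₀Ico
      set n : ℕ := j - j₀ with hndef
      have hnH : n ≤ H := by omega
      have hiter : f^[j] y = f^[n] (f^[j₀] y) := by
        rw [← Function.iterate_add_apply]
        congr 1
        omega
      have hdist1 : dist (f^[n] (f^[j₀] y)) (f^[n] c) < ε / 3 :=
        hδ n (f^[j₀] y) (horb j₀ y hy) c hcX
          (lt_of_lt_of_le (Metric.mem_ball.mp hcball) (hσδ n hnH))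
      have hjP : P j := (Finset.mem_filter.mp hj).2
      obtain ⟨c', hc'C, hc'ball⟩ : ∃ c' ∈ C, f^[j] y ∈ Metric.ball c' σ := by
        simpa [hPdef] using hjP
      have hinfd : Metric.infDist (f^[n] c) C < ε := by
        have h1 : Metric.infDist (f^[n] c) C ≤ dist (f^[n] c) c' :=
          Metric.infDist_le_dist_of_mem hc'C
      -- dist (f^[n] c) c' ≤ dist (f^[n] c) (f^[j] y) + dist (f^[j] y) c'
        have h2 : dist (f^[n] c) c' ≤ dist (f^[n] c) (f^[j] y) + dist (f^[j] y) c' :=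
          dist_triangle _ _ _
        have h3 : dist (f^[n] c) (f^[j] y) < ε / 3 := by
          rw [hiter, dist_comm]
          exact hdist1
        have h4 : dist (f^[j] y) c' < σ := Metric.mem_ball.mp hc'ball
        have := hσε
        linarith
      have hD : f^[n] c ∈ D := hmemD c ((hmemCf c).mpr hcC) n hnH
      by_contra hnot
      have hnotC : f^[n] c ∉ C := fun h => hnot ((hmemCf _).mpr h)
      exact absurd hinfd (not_lt.mpr (hεle _ hD hnotC))
    -- injectivity on the window
    have hinj : Set.InjOn (fun j => f^[j - j₀] c) ↑Wi := by
      intro j hj j' hj' heq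
      rw [Finset.mem_coe] at hj hj'
      simp only at heq
      have hj₀le : j₀ ≤ j := Wi.min'_le j hj
      have hj₀le' : j₀ ≤ j' := Wi.min'_le j' hj'
      by_contra hne
      have hcCmem : f^[j - j₀] c ∈ C := (hmemCf _).mp (hkey j hj)
      have hcCmem' : f^[j' - j₀] c ∈ C := (hmemCf _).mp (hkey j' hj')
      rcases lt_or_gt_of_ne (show j - j₀ ≠ j' - j₀ by omega) with hlt | hgt
      · have hper : f^[(j' - j₀) - (j - j₀)] (f^[j - j₀] c) = f^[j - j₀] c := by
          rw [← Function.iterate_add_apply]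
          rw [show (j' - j₀) - (j - j₀) + (j - j₀) = j' - j₀ by omega]
          exact heq.symm
        exact hcCmem.2.2 ⟨(j' - j₀) - (j - j₀), by omega, hper⟩
      · have hper : f^[(j - j₀) - (j' - j₀)] (f^[j' - j₀] c) = f^[j' - j₀] c := by
          rw [← Function.iterate_add_apply]
          rw [show (j - j₀) - (j' - j₀) + (j' - j₀) = j - j₀ by omega]
          exact heq
        exact hcCmem'.2.2 ⟨(j - j₀) - (j' - j₀), by omega, hper⟩
    exact Finset.card_le_card_of_injOn _ hkey hinj
  -- covering by windows
  have hcover : V ⊆ (Finset.range (k / H + 1)).biUnion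
      (fun i => (Finset.Ico (i * H) (i * H + H)).filter P) := by
    intro j hj
    have hjk : j < k := Finset.mem_range.mp (Finset.mem_filter.mp hj).1
    have hjP : P j := (Finset.mem_filter.mp hj).2
    refine Finset.mem_biUnion.mpr ⟨j / H, ?_, ?_⟩
    · exact Finset.mem_range.mpr (Nat.lt_succ_of_le (Nat.div_le_div_right hjk.le))
    · refine Finset.mem_filter.mpr ⟨Finset.mem_Ico.mpr ⟨Nat.div_mul_le_self j H, ?_⟩, hjP⟩
      have h1 : j / H * H + j % H = j := Nat.div_add_mod' j H
      have h2 : j % H < H := Nat.mod_lt j hHpos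
      calc j = j / H * H + j % H := h1.symm
      _ < j / H * H + H := Nat.add_lt_add_left h2 _
  have hcard : V.card ≤ (k / H + 1) * r := by
    calc V.card ≤ ((Finset.range (k / H + 1)).biUnion
        (fun i => (Finset.Ico (i * H) (i * H + H)).filter P)).card :=
          Finset.card_le_card hcover
    _ ≤ ∑ i ∈ Finset.range (k / H + 1),
        ((Finset.Ico (i * H) (i * H + H)).filter P).card := Finset.card_biUnion_le
    _ ≤ ∑ _i ∈ Finset.range (k / H + 1), r := Finset.sum_le_sum fun i _ => hwindow i
    _ = (k / H + 1) * r := by rw [Finset.sum_const, Finset.card_range, smul_eq_mul]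
  -- numerics
  have hkH : (H : ℝ) ≤ (k : ℝ) := by exact_mod_cast hk
  have hH0 : (0 : ℝ) < (H : ℝ) := by exact_mod_cast hHpos
  have hk0 : (0 : ℝ) < (k : ℝ) := lt_of_lt_of_le hH0 hkH
  have hr0 : (0 : ℝ) < (r : ℝ) := by exact_mod_cast hrpos
  have h2r : 2 * (r : ℝ) < t * (H : ℝ) := by
    have := hHgt
    rw [div_lt_iff₀ ht0] at this
    linarith
  have hVreal : (V.card : ℝ) ≤ ((k : ℝ) / (H : ℝ) + 1) * r := by
    calc (V.card : ℝ) ≤ ((k / H + 1) * r : ℕ) := by exact_mod_cast hcard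
    _ = (((k / H : ℕ) : ℝ) + 1) * r := by push_cast; ring
    _ ≤ ((k : ℝ) / (H : ℝ) + 1) * r := by
        have := Nat.cast_div_le (α := ℝ) (m := k) (n := H)
        nlinarith
  have hdivbound : (k : ℝ) / (H : ℝ) * r < t / 2 * k := by
    rw [div_mul_eq_mul_div, div_lt_iff₀ hH0]
    nlinarith
  have hrbound : (r : ℝ) < t / 2 * k := by nlinarith
  nlinarith
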